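/- arXiv:1710.11120 — 2 statements merged into one kernel-verified Lean document; each statement's English description precedes it below -/
import Mathlib

section
/- Let P be an n×n real symmetric positive semidefinite matrix, W' an l×l real symmetric positive definite matrix, C an l×n real matrix, and p a real number. Then the matrix p²·C P Cᵀ + W' is invertible, and the gain K* = p · P Cᵀ (p²·C P Cᵀ + W')⁻¹ is the unique minimizer over all n×l real matrices K of the cost f(K) = trace( (I − p·K C) P (I − p·K C)ᵀ + K W' Kᵀ ); that is, f(K*) ≤ f(K) for every K, with equality only when K = K*. -/
open Matrix

/-- The optimal Kalman-type gain for the linear optimal estimator over a cognitive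
radio link: `K* = p • P Cᵀ (p² • C P Cᵀ + W')⁻¹`. -/
noncomputable def crOptimalGain {n l : ℕ} (P : Matrix (Fin n) (Fin n) ℝ)
    (W' : Matrix (Fin l) (Fin l) ℝ) (C : Matrix (Fin l) (Fin n) ℝ) (p : ℝ) :
    Matrix (Fin n) (Fin l) ℝ :=
  p • (P * Cᵀ * (p ^ 2 • (C * P * Cᵀ) + W')⁻¹)

/-- Joseph-form expansion of the cost around an arbitrary reference gain `K₀`:
pure algebra, no hypotheses on the matrices beyond the ring structure. -/
theorem crJosephExpand {n l : ℕ} (P : Matrix (Fin n) (Fin n) ℝ)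
    (W' : Matrix (Fin l) (Fin l) ℝ) (C : Matrix (Fin l) (Fin n) ℝ) (p : ℝ)
    (K K₀ : Matrix (Fin n) (Fin l) ℝ) :
    (1 - p • (K * C)) * P * (1 - p • (K * C))ᵀ + K * W' * Kᵀ
      = (1 - p • (K₀ * C)) * P * (1 - p • (K₀ * C))ᵀ + K₀ * W' * K₀ᵀ
        + (K - K₀) * (p ^ 2 • (C * P * Cᵀ) + W') * (K - K₀)ᵀ
        + (K - K₀) * (W' * K₀ᵀ - p • (C * P * (1 - p • (K₀ * C))ᵀ))
        + (K₀ * W' - p • ((1 - p • (K₀ * C)) * P * Cᵀ)) * (K - K₀)ᵀ := by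
  simp only [transpose_sub, transpose_add, transpose_mul, transpose_smul, transpose_one,
    pow_two]
  simp only [Matrix.sub_mul, Matrix.mul_sub, Matrix.add_mul, Matrix.mul_add,
    Matrix.smul_mul, Matrix.mul_smul, Matrix.one_mul, Matrix.mul_one,
    smul_add, smul_sub, smul_smul, Matrix.mul_assoc]
  module

/-- Trace of `N Nᵀ` is the sum of squares of the entries of `N`. -/
theorem trace_mul_transpose_self {n l : ℕ} (N : Matrix (Fin n) (Fin l) ℝ) :
    (N * Nᵀ).trace = ∑ i, ∑ j, (N i j) ^ 2 := by
  simp [Matrix.trace, Matrix.diag, Matrix.mul_apply, sq]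

/-- With `P` symmetric positive semidefinite (the a priori error covariance), `W'`
symmetric positive definite (the modified measurement-noise covariance), `C` the
measurement matrix and `p = P(s_t = 1 | s_r = 1)`, the matrix `p² • C P Cᵀ + W'` is
invertible and the gain `K* = p • P Cᵀ (p² • C P Cᵀ + W')⁻¹` is the unique minimizer of
the Joseph-form trace cost `K ↦ trace((I - p•K C) P (I - p•K C)ᵀ + K W' Kᵀ)`. -/
theorem crOptimalGain_isUnit_and_unique_minimizer {n l : ℕ}
    (P : Matrix (Fin n) (Fin n) ℝ) (hP : P.PosSemidef)
    (W' : Matrix (Fin l) (Fin l) ℝ) (hW : W'.PosDef)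
    (C : Matrix (Fin l) (Fin n) ℝ) (p : ℝ) :
    IsUnit (p ^ 2 • (C * P * Cᵀ) + W') ∧
      ∀ K : Matrix (Fin n) (Fin l) ℝ,
        ((1 - p • (crOptimalGain P W' C p * C)) * P *
              (1 - p • (crOptimalGain P W' C p * C))ᵀ +
            crOptimalGain P W' C p * W' * (crOptimalGain P W' C p)ᵀ).trace ≤
          ((1 - p • (K * C)) * P * (1 - p • (K * C))ᵀ + K * W' * Kᵀ).trace ∧
        (((1 - p • (K * C)) * P * (1 - p • (K * C))ᵀ + K * W' * Kᵀ).trace =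
            ((1 - p • (crOptimalGain P W' C p * C)) * P *
                  (1 - p • (crOptimalGain P W' C p * C))ᵀ +
                crOptimalGain P W' C p * W' * (crOptimalGain P W' C p)ᵀ).trace →
          K = crOptimalGain P W' C p) := by
  classical
  set S : Matrix (Fin l) (Fin l) ℝ := p ^ 2 • (C * P * Cᵀ) + W' with hSdef
  -- `S` is positive definite, hence invertible
  have hCP : (p ^ 2 • (C * P * Cᵀ)).PosSemidef := by
    have h := hP.mul_mul_conjTranspose_same (p • C)
    have he : (p • C) * P * (p • C)ᴴ = p ^ 2 • (C * P * Cᵀ) := by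
      rw [conjTranspose_eq_transpose_of_trivial, transpose_smul]
      simp [Matrix.smul_mul, Matrix.mul_smul, smul_smul, pow_two]
    rwa [he] at h
  have hS : S.PosDef := Matrix.PosDef.posSemidef_add hCP hW
  have hdet : IsUnit S.det := (isUnit_iff_isUnit_det S).mp hS.isUnit
  have hSS : S * S⁻¹ = 1 := mul_nonsing_inv S hdet
  have hSS' : S⁻¹ * S = 1 := nonsing_inv_mul S hdet
  -- symmetry facts
  have hPt : Pᵀ = P := by
    have h := hP.isHermitian.eq
    rwa [conjTranspose_eq_transpose_of_trivial] at h
  have hWt : W'ᵀ = W' := by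
    have h := hW.isHermitian.eq
    rwa [conjTranspose_eq_transpose_of_trivial] at h
  set K₀ := crOptimalGain P W' C p with hK₀
  have hK₀eq : K₀ = p • (P * Cᵀ * S⁻¹) := rfl
  -- the stationarity identity for the optimal gain
  have hkey : K₀ * W' = p • ((1 - p • (K₀ * C)) * P * Cᵀ) := by
    have hW'eq : W' = S - p ^ 2 • (C * P * Cᵀ) := by rw [hSdef]; abel
    rw [hK₀eq]
    conv_lhs => rw [hW'eq]
    simp only [Matrix.smul_mul, Matrix.mul_smul, Matrix.mul_sub, Matrix.sub_mul,
      Matrix.one_mul, Matrix.mul_one, smul_sub, smul_smul, Matrix.mul_assoc, hSS',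
      pow_two]
    module
  have hkeyT : W' * K₀ᵀ = p • (C * P * (1 - p • (K₀ * C))ᵀ) := by
    have h := congrArg Matrix.transpose hkey
    simpa [transpose_mul, transpose_smul, transpose_transpose, hWt, hPt,
      Matrix.mul_assoc] using h
  -- Joseph-form decomposition around the optimal gain
  have main : ∀ K : Matrix (Fin n) (Fin l) ℝ,
      (1 - p • (K * C)) * P * (1 - p • (K * C))ᵀ + K * W' * Kᵀ
        = ((1 - p • (K₀ * C)) * P * (1 - p • (K₀ * C))ᵀ + K₀ * W' * K₀ᵀ)
          + (K - K₀) * S * (K - K₀)ᵀ := by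
    intro K
    have base := crJosephExpand P W' C p K K₀
    rw [base, hkey, hkeyT]
    simp [hSdef]
  -- square-root factorization of the quadratic remainder
  obtain ⟨Q, hQt, hQ2⟩ : ∃ Q : Matrix (Fin l) (Fin l) ℝ, Qᵀ = Q ∧ Q * Q = S := by
    open scoped MatrixOrder in
    refine ⟨CFC.sqrt S, ?_, CFC.sqrt_mul_sqrt_self S hS.posSemidef.nonneg⟩
    open scoped MatrixOrder in
    have h := (Matrix.nonneg_iff_posSemidef.mp (CFC.sqrt_nonneg S)).1.eq
    rwa [conjTranspose_eq_transpose_of_trivial] at h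
  have hquad : ∀ Δ : Matrix (Fin n) (Fin l) ℝ,
      Δ * S * Δᵀ = (Δ * Q) * (Δ * Q)ᵀ := by
    intro Δ
    rw [transpose_mul, hQt, ← hQ2]
    simp [Matrix.mul_assoc]
  refine ⟨hS.isUnit, fun K => ?_⟩
  have htr : ((1 - p • (K * C)) * P * (1 - p • (K * C))ᵀ + K * W' * Kᵀ).trace
      = ((1 - p • (K₀ * C)) * P * (1 - p • (K₀ * C))ᵀ + K₀ * W' * K₀ᵀ).trace
        + ∑ i, ∑ j, (((K - K₀) * Q) i j) ^ 2 := by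
    rw [main K, trace_add, hquad, trace_mul_transpose_self]
  have hnn : 0 ≤ ∑ i, ∑ j, (((K - K₀) * Q) i j) ^ 2 :=
    Finset.sum_nonneg fun i _ => Finset.sum_nonneg fun j _ => sq_nonneg _
  constructor
  · rw [htr]; exact le_add_of_nonneg_right hnn
  · intro heq
    rw [htr] at heq
    have hzero : ∑ i, ∑ j, (((K - K₀) * Q) i j) ^ 2 = 0 := by linarith
    have hNQ : (K - K₀) * Q = 0 := by
      ext i j
      have h1 := (Finset.sum_eq_zero_iff_of_nonneg
        (fun i _ => Finset.sum_nonneg fun j _ => sq_nonneg (((K - K₀) * Q) i j))).mp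
        hzero i (Finset.mem_univ i)
      have h2 := (Finset.sum_eq_zero_iff_of_nonneg
        (fun j _ => sq_nonneg (((K - K₀) * Q) i j))).mp h1 j (Finset.mem_univ j)
      simpa using pow_eq_zero_iff two_ne_zero |>.mp h2
    have hKS : (K - K₀) * S = 0 := by
      rw [← hQ2, ← Matrix.mul_assoc, hNQ, Matrix.zero_mul]
    have : K - K₀ = 0 := by
      have h := congrArg (· * S⁻¹) hKS
      simpa [Matrix.mul_assoc, hSS, Matrix.zero_mul] using h
    exact sub_eq_zero.mp this
end

section
/- Let e : Ω → ℝⁿ and v : Ω → ℝᵐ be square-integrable random vectors and s : Ω → {0,1} a random variable, mutually independent, with E[e eᵀ] = P, E[v] = 0, E[v vᵀ] = V, and E[s] = p. Let A (n×n) and B (n×m) be real matrices and u ∈ ℝᵐ a deterministic vector, and define e' = A e + (s − p)·B u + s·B v. Then E[e' e'ᵀ] = A P Aᵀ + p(1 − p)·B u uᵀ Bᵀ + p·B V Bᵀ. -/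
open MeasureTheory ProbabilityTheory Matrix

private lemma l2_mul_integrable {Ωs : Type*} [MeasurableSpace Ωs] {μ : Measure Ωs}
    {f g : Ωs → ℝ} (hf : MemLp f 2 μ) (hg : MemLp g 2 μ) :
    Integrable (fun a => f a * g a) μ := by
  have h := hg.smul hf (p := 2) (q := 2) (r := 1)
  rw [← memLp_one_iff_integrable]
  exact h

/-- One-step prediction-error covariance over a cognitive radio link: with `e`, `v`, `s`
mutually independent, `E[e eᵀ] = P`, `E[v] = 0`, `E[v vᵀ] = V`, `s ∈ {0,1}` with mean
`p`, and deterministic control `u`, the error `e' = A e + (s - p)•B u + s•B v` satisfies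
`E[e' e'ᵀ] = A P Aᵀ + p(1-p)•B u uᵀ Bᵀ + p•B V Bᵀ`. -/
theorem prediction_error_covariance
    {Ωs : Type*} [MeasurableSpace Ωs] (μ : Measure Ωs) [IsProbabilityMeasure μ]
    {n m : ℕ} (e : Ωs → Fin n → ℝ) (v : Ωs → Fin m → ℝ) (s : Ωs → ℝ)
    (P : Matrix (Fin n) (Fin n) ℝ) (V : Matrix (Fin m) (Fin m) ℝ)
    (A : Matrix (Fin n) (Fin n) ℝ) (B : Matrix (Fin n) (Fin m) ℝ)
    (u : Fin m → ℝ) (p : ℝ)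
    (hemeas : ∀ i, Measurable fun a => e a i)
    (hvmeas : ∀ i, Measurable fun a => v a i)
    (hsmeas : Measurable s)
    (he2 : ∀ i, MemLp (fun a => e a i) 2 μ)
    (hv2 : ∀ i, MemLp (fun a => v a i) 2 μ)
    (hs01 : ∀ a, s a = 0 ∨ s a = 1)
    (hP : ∀ i j, ∫ a, e a i * e a j ∂μ = P i j)
    (hvmean : ∀ i, ∫ a, v a i ∂μ = 0)
    (hV : ∀ i j, ∫ a, v a i * v a j ∂μ = V i j)
    (hsp : ∫ a, s a ∂μ = p)
    (hindep_ev : IndepFun e v μ)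
    (hindep_ev_s : IndepFun (fun a => (e a, v a)) s μ)
    (e' : Ωs → Fin n → ℝ)
    (he' : ∀ a, e' a =
      A.mulVec (e a) + (s a - p) • B.mulVec u + s a • B.mulVec (v a)) :
    ∀ i j, ∫ a, e' a i * e' a j ∂μ =
      (A * P * Aᵀ + (p * (1 - p)) • (B * Matrix.vecMulVec u u * Bᵀ) +
        p • (B * V * Bᵀ)) i j := by
  -- basic facts about s
  have hss : ∀ a, s a * s a = s a := by
    intro a; rcases hs01 a with h | h <;> simp [h]
  have hsb : ∀ a, ‖s a‖ ≤ 1 := by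
    intro a; rcases hs01 a with h | h <;> simp [h]
  have hsint : Integrable s μ :=
    (integrable_const (1 : ℝ)).mono' hsmeas.aestronglyMeasurable (ae_of_all _ hsb)
  have hspb : ∀ a, ‖s a - p‖ ≤ 1 + |p| := by
    intro a
    calc ‖s a - p‖ ≤ ‖s a‖ + ‖p‖ := norm_sub_le _ _
    _ ≤ 1 + |p| := by have := hsb a; simp [Real.norm_eq_abs] at this ⊢; linarith
  have hsps_b : ∀ a, ‖(s a - p) * s a‖ ≤ 1 + |p| := by
    intro a
    calc ‖(s a - p) * s a‖ = ‖s a - p‖ * ‖s a‖ := norm_mul _ _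
    _ ≤ (1 + |p|) * 1 := by
        apply mul_le_mul (hspb a) (hsb a) (norm_nonneg _)
        positivity
    _ = 1 + |p| := mul_one _
  -- integrals of functions of s
  have hs_sub : ∫ a, (s a - p) ∂μ = 0 := by
    rw [integral_sub hsint (integrable_const p)]
    simp [hsp]
  have hs_sq : ∫ a, (s a - p) * (s a - p) ∂μ = p - p * p := by
    have h1 : ∀ a, (s a - p) * (s a - p) = (s a - (2 * p) * s a) + p * p := by
      intro a; linear_combination hss a
    simp_rw [h1]
    have ha : Integrable (fun a => s a - 2 * p * s a) μ := hsint.sub (hsint.const_mul _)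
    have hb : Integrable (fun a => 2 * p * s a) μ := hsint.const_mul _
    rw [integral_add ha (integrable_const _), integral_sub hsint hb,
      integral_const_mul, hsp, integral_const]
    simp only [measure_univ, probReal_univ, ENNReal.toReal_one, smul_eq_mul, one_mul]
    ring
  have hs_sps : ∫ a, (s a - p) * s a ∂μ = p - p * p := by
    have h1 : ∀ a, (s a - p) * s a = s a - p * s a := by
      intro a; linear_combination hss a
    simp_rw [h1]
    have hb : Integrable (fun a => p * s a) μ := hsint.const_mul _
    rw [integral_sub hsint hb, integral_const_mul, hsp]
  -- measurability and L² of components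
  have hXmeas : ∀ i, Measurable (fun a => A.mulVec (e a) i) := by
    intro i; simp only [Matrix.mulVec, dotProduct]
    exact Finset.measurable_sum _ fun k _ => (hemeas k).const_mul _
  have hWmeas : ∀ i, Measurable (fun a => B.mulVec (v a) i) := by
    intro i; simp only [Matrix.mulVec, dotProduct]
    exact Finset.measurable_sum _ fun k _ => (hvmeas k).const_mul _
  have hX2 : ∀ i, MemLp (fun a => A.mulVec (e a) i) 2 μ := by
    intro i; simp only [Matrix.mulVec, dotProduct]
    exact memLp_finset_sum _ fun k _ => (he2 k).const_mul _
  have hW2 : ∀ i, MemLp (fun a => B.mulVec (v a) i) 2 μ := by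
    intro i; simp only [Matrix.mulVec, dotProduct]
    exact memLp_finset_sum _ fun k _ => (hv2 k).const_mul _
  have hXint : ∀ i, Integrable (fun a => A.mulVec (e a) i) μ :=
    fun i => (hX2 i).integrable one_le_two
  have hWint : ∀ i, Integrable (fun a => B.mulVec (v a) i) μ :=
    fun i => (hW2 i).integrable one_le_two
  have hWmean : ∀ i, ∫ a, B.mulVec (v a) i ∂μ = 0 := by
    intro i; simp only [Matrix.mulVec, dotProduct]
    rw [integral_finset_sum _ fun k _ => ((hv2 k).integrable one_le_two).const_mul _]
    simp only [integral_const_mul, hvmean, mul_zero, Finset.sum_const_zero]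
  -- measurable maps on product space
  have hφX : ∀ i, Measurable (fun q : (Fin n → ℝ) × (Fin m → ℝ) => A.mulVec q.1 i) := by
    intro i; simp only [Matrix.mulVec, dotProduct]
    exact Finset.measurable_sum _ fun k _ =>
      ((measurable_pi_apply k).comp measurable_fst).const_mul _
  have hφW : ∀ i, Measurable (fun q : (Fin n → ℝ) × (Fin m → ℝ) => B.mulVec q.2 i) := by
    intro i; simp only [Matrix.mulVec, dotProduct]
    exact Finset.measurable_sum _ fun k _ =>
      ((measurable_pi_apply k).comp measurable_snd).const_mul _
  have hevmeas : Measurable (fun a => (e a, v a)) :=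
    (measurable_pi_lambda _ hemeas).prodMk (measurable_pi_lambda _ hvmeas)
  -- independence-based product formula: (e,v)-function times s-function
  have hmul_indep : ∀ (φ : (Fin n → ℝ) × (Fin m → ℝ) → ℝ) (g : ℝ → ℝ),
      Measurable φ → Measurable g →
      ∫ a, φ (e a, v a) * g (s a) ∂μ =
        (∫ a, φ (e a, v a) ∂μ) * ∫ a, g (s a) ∂μ := by
    intro φ g hφ hg
    have h := (hindep_ev_s.comp hφ hg).integral_mul_eq_mul_integral
      ((hφ.comp hevmeas).aestronglyMeasurable) ((hg.comp hsmeas).aestronglyMeasurable)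
    simpa using h
  -- independence of e-function and v-function
  have hmul_ev : ∀ i j, ∫ a, A.mulVec (e a) i * B.mulVec (v a) j ∂μ = 0 := by
    intro i j
    have hφ : Measurable (fun x : Fin n → ℝ => A.mulVec x i) := by
      simp only [Matrix.mulVec, dotProduct]
      exact Finset.measurable_sum _ fun k _ => (measurable_pi_apply k).const_mul _
    have hψ : Measurable (fun y : Fin m → ℝ => B.mulVec y j) := by
      simp only [Matrix.mulVec, dotProduct]
      exact Finset.measurable_sum _ fun k _ => (measurable_pi_apply k).const_mul _
    have h := (hindep_ev.comp hφ hψ).integral_mul_eq_mul_integral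
      ((hφ.comp (measurable_pi_lambda _ hemeas)).aestronglyMeasurable)
      ((hψ.comp (measurable_pi_lambda _ hvmeas)).aestronglyMeasurable)
    have h2 : ∫ a, A.mulVec (e a) i * B.mulVec (v a) j ∂μ =
        (∫ a, A.mulVec (e a) i ∂μ) * ∫ a, B.mulVec (v a) j ∂μ := by simpa using h
    rw [h2, hWmean j, mul_zero]
  -- second moments of X and W
  have hXXval : ∀ i j, ∫ a, A.mulVec (e a) i * A.mulVec (e a) j ∂μ = (A * P * Aᵀ) i j := by
    intro i j
    have h1 : ∀ a, A.mulVec (e a) i * A.mulVec (e a) j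
        = ∑ k, ∑ l, A i k * A j l * (e a k * e a l) := by
      intro a
      simp only [Matrix.mulVec, dotProduct]
      rw [Finset.sum_mul_sum]
      refine Finset.sum_congr rfl fun k _ => Finset.sum_congr rfl fun l _ => by ring
    simp_rw [h1]
    rw [integral_finset_sum _ fun k _ => integrable_finset_sum _ fun l _ =>
      ((l2_mul_integrable (he2 k) (he2 l)).const_mul _)]
    have h2 : ∀ k, ∫ a, ∑ l, A i k * A j l * (e a k * e a l) ∂μ
        = ∑ l, A i k * A j l * P k l := by
      intro k
      rw [integral_finset_sum _ fun l _ => ((l2_mul_integrable (he2 k) (he2 l)).const_mul _)]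
      refine Finset.sum_congr rfl fun l _ => ?_
      rw [integral_const_mul, hP]
    simp_rw [h2]
    simp only [Matrix.mul_apply, transpose_apply, Finset.sum_mul]
    rw [Finset.sum_comm]
    refine Finset.sum_congr rfl fun l _ => Finset.sum_congr rfl fun k _ => by ring
  have hWWval : ∀ i j, ∫ a, B.mulVec (v a) i * B.mulVec (v a) j ∂μ = (B * V * Bᵀ) i j := by
    intro i j
    have h1 : ∀ a, B.mulVec (v a) i * B.mulVec (v a) j
        = ∑ k, ∑ l, B i k * B j l * (v a k * v a l) := by
      intro a
      simp only [Matrix.mulVec, dotProduct]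
      rw [Finset.sum_mul_sum]
      refine Finset.sum_congr rfl fun k _ => Finset.sum_congr rfl fun l _ => by ring
    simp_rw [h1]
    rw [integral_finset_sum _ fun k _ => integrable_finset_sum _ fun l _ =>
      ((l2_mul_integrable (hv2 k) (hv2 l)).const_mul _)]
    have h2 : ∀ k, ∫ a, ∑ l, B i k * B j l * (v a k * v a l) ∂μ
        = ∑ l, B i k * B j l * V k l := by
      intro k
      rw [integral_finset_sum _ fun l _ => ((l2_mul_integrable (hv2 k) (hv2 l)).const_mul _)]
      refine Finset.sum_congr rfl fun l _ => ?_
      rw [integral_const_mul, hV]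
    simp_rw [h2]
    simp only [Matrix.mul_apply, transpose_apply, Finset.sum_mul]
    rw [Finset.sum_comm]
    refine Finset.sum_congr rfl fun l _ => Finset.sum_congr rfl fun k _ => by ring
  intro i j
  -- the nine integrands
  set Xi : Ωs → ℝ := fun a => A.mulVec (e a) i with hXidef
  set Xj : Ωs → ℝ := fun a => A.mulVec (e a) j with hXjdef
  set Wi : Ωs → ℝ := fun a => B.mulVec (v a) i with hWidef
  set Wj : Ωs → ℝ := fun a => B.mulVec (v a) j with hWjdef
  set ci : ℝ := B.mulVec u i with hcidef
  set cj : ℝ := B.mulVec u j with hcjdef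
  -- expansion of the product
  have hexp : ∀ a, e' a i * e' a j =
      Xi a * Xj a
      + (Xi a * (s a - p)) * cj
      + (Xi a * Wj a) * s a
      + (Xj a * (s a - p)) * ci
      + ((s a - p) * (s a - p)) * (ci * cj)
      + (Wj a * ((s a - p) * s a)) * ci
      + (Xj a * Wi a) * s a
      + (Wi a * ((s a - p) * s a)) * cj
      + (Wi a * Wj a) * s a := by
    intro a
    have h := he' a
    have hi : e' a i = Xi a + (s a - p) * ci + s a * Wi a := by
      rw [h]; simp [hXidef, hWidef, hcidef]
    have hj : e' a j = Xj a + (s a - p) * cj + s a * Wj a := by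
      rw [h]; simp [hXjdef, hWjdef, hcjdef]
    rw [hi, hj]
    linear_combination (Wi a * Wj a) * hss a
  -- integrability of each term
  have hiF1 : Integrable (fun a => Xi a * Xj a) μ := l2_mul_integrable (hX2 i) (hX2 j)
  have hspmeas : Measurable (fun a => s a - p) := hsmeas.sub measurable_const
  have hspsmeas : Measurable (fun a => (s a - p) * s a) := hspmeas.mul hsmeas
  have hiF2 : Integrable (fun a => (Xi a * (s a - p)) * cj) μ := by
    have h := (Integrable.bdd_mul (hXint i) hspmeas.aestronglyMeasurable
      (ae_of_all _ hspb)).mul_const cj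
    simpa [mul_comm] using h
  have hiXW : Integrable (fun a => Xi a * Wj a) μ := l2_mul_integrable (hX2 i) (hW2 j)
  have hiF3 : Integrable (fun a => (Xi a * Wj a) * s a) μ := by
    have h := Integrable.bdd_mul hiXW hsmeas.aestronglyMeasurable (ae_of_all _ hsb)
    simpa [mul_comm] using h
  have hiF4 : Integrable (fun a => (Xj a * (s a - p)) * ci) μ := by
    have h := (Integrable.bdd_mul (hXint j) hspmeas.aestronglyMeasurable
      (ae_of_all _ hspb)).mul_const ci
    simpa [mul_comm] using h
  have hiF5 : Integrable (fun a => ((s a - p) * (s a - p)) * (ci * cj)) μ := by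
    refine Integrable.mul_const ?_ _
    refine (integrable_const ((1 + |p|) * (1 + |p|))).mono'
      (hspmeas.mul hspmeas).aestronglyMeasurable (ae_of_all _ fun a => ?_)
    calc ‖(s a - p) * (s a - p)‖ = ‖s a - p‖ * ‖s a - p‖ := norm_mul _ _
    _ ≤ (1 + |p|) * (1 + |p|) := by
        have := hspb a
        apply mul_le_mul this this (norm_nonneg _)
        positivity
  have hiF6 : Integrable (fun a => (Wj a * ((s a - p) * s a)) * ci) μ := by
    have h := (Integrable.bdd_mul (hWint j) hspsmeas.aestronglyMeasurable
      (ae_of_all _ hsps_b)).mul_const ci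
    simpa [mul_comm] using h
  have hiXW2 : Integrable (fun a => Xj a * Wi a) μ := l2_mul_integrable (hX2 j) (hW2 i)
  have hiF7 : Integrable (fun a => (Xj a * Wi a) * s a) μ := by
    have h := Integrable.bdd_mul hiXW2 hsmeas.aestronglyMeasurable (ae_of_all _ hsb)
    simpa [mul_comm] using h
  have hiF8 : Integrable (fun a => (Wi a * ((s a - p) * s a)) * cj) μ := by
    have h := (Integrable.bdd_mul (hWint i) hspsmeas.aestronglyMeasurable
      (ae_of_all _ hsps_b)).mul_const cj
    simpa [mul_comm] using h
  have hiWW : Integrable (fun a => Wi a * Wj a) μ := l2_mul_integrable (hW2 i) (hW2 j)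
  have hiF9 : Integrable (fun a => (Wi a * Wj a) * s a) μ := by
    have h := Integrable.bdd_mul hiWW hsmeas.aestronglyMeasurable (ae_of_all _ hsb)
    simpa [mul_comm] using h
  -- values of the individual integrals
  have hT2 : ∫ a, (Xi a * (s a - p)) * cj ∂μ = 0 := by
    rw [integral_mul_const]
    have h := hmul_indep (fun q => A.mulVec q.1 i) (fun t => t - p) (hφX i)
      (measurable_id.sub measurable_const)
    rw [hXidef]
    rw [h, hs_sub, mul_zero, zero_mul]
  have hT4 : ∫ a, (Xj a * (s a - p)) * ci ∂μ = 0 := by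
    rw [integral_mul_const]
    have h := hmul_indep (fun q => A.mulVec q.1 j) (fun t => t - p) (hφX j)
      (measurable_id.sub measurable_const)
    rw [hXjdef]
    rw [h, hs_sub, mul_zero, zero_mul]
  have hT3 : ∫ a, (Xi a * Wj a) * s a ∂μ = 0 := by
    have h := hmul_indep (fun q => A.mulVec q.1 i * B.mulVec q.2 j) (fun t => t)
      ((hφX i).mul (hφW j)) measurable_id
    rw [hXidef, hWjdef]
    rw [h, hmul_ev i j, zero_mul]
  have hT7 : ∫ a, (Xj a * Wi a) * s a ∂μ = 0 := by
    have h := hmul_indep (fun q => A.mulVec q.1 j * B.mulVec q.2 i) (fun t => t)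
      ((hφX j).mul (hφW i)) measurable_id
    rw [hXjdef, hWidef]
    rw [h, hmul_ev j i, zero_mul]
  have hT5 : ∫ a, ((s a - p) * (s a - p)) * (ci * cj) ∂μ = (p - p * p) * (ci * cj) := by
    rw [integral_mul_const, hs_sq]
  have hT6 : ∫ a, (Wj a * ((s a - p) * s a)) * ci ∂μ = 0 := by
    rw [integral_mul_const]
    have h := hmul_indep (fun q => B.mulVec q.2 j) (fun t => (t - p) * t) (hφW j)
      ((measurable_id.sub measurable_const).mul measurable_id)
    rw [hWjdef]
    rw [h, hWmean j, zero_mul, zero_mul]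
  have hT8 : ∫ a, (Wi a * ((s a - p) * s a)) * cj ∂μ = 0 := by
    rw [integral_mul_const]
    have h := hmul_indep (fun q => B.mulVec q.2 i) (fun t => (t - p) * t) (hφW i)
      ((measurable_id.sub measurable_const).mul measurable_id)
    rw [hWidef]
    rw [h, hWmean i, zero_mul, zero_mul]
  have hT9 : ∫ a, (Wi a * Wj a) * s a ∂μ = p * (B * V * Bᵀ) i j := by
    have h := hmul_indep (fun q => B.mulVec q.2 i * B.mulVec q.2 j) (fun t => t)
      ((hφW i).mul (hφW j)) measurable_id
    rw [hWidef, hWjdef]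
    rw [h, hWWval i j, hsp, mul_comm]
  -- assemble
  have g2 : Integrable (fun a => Xi a * Xj a + (Xi a * (s a - p)) * cj) μ := hiF1.add hiF2
  have g3 : Integrable (fun a => Xi a * Xj a + (Xi a * (s a - p)) * cj
      + (Xi a * Wj a) * s a) μ := g2.add hiF3
  have g4 : Integrable (fun a => Xi a * Xj a + (Xi a * (s a - p)) * cj
      + (Xi a * Wj a) * s a + (Xj a * (s a - p)) * ci) μ := g3.add hiF4
  have g5 : Integrable (fun a => Xi a * Xj a + (Xi a * (s a - p)) * cj
      + (Xi a * Wj a) * s a + (Xj a * (s a - p)) * ci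
      + ((s a - p) * (s a - p)) * (ci * cj)) μ := g4.add hiF5
  have g6 : Integrable (fun a => Xi a * Xj a + (Xi a * (s a - p)) * cj
      + (Xi a * Wj a) * s a + (Xj a * (s a - p)) * ci
      + ((s a - p) * (s a - p)) * (ci * cj)
      + (Wj a * ((s a - p) * s a)) * ci) μ := g5.add hiF6
  have g7 : Integrable (fun a => Xi a * Xj a + (Xi a * (s a - p)) * cj
      + (Xi a * Wj a) * s a + (Xj a * (s a - p)) * ci
      + ((s a - p) * (s a - p)) * (ci * cj)
      + (Wj a * ((s a - p) * s a)) * ci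
      + (Xj a * Wi a) * s a) μ := g6.add hiF7
  have g8 : Integrable (fun a => Xi a * Xj a + (Xi a * (s a - p)) * cj
      + (Xi a * Wj a) * s a + (Xj a * (s a - p)) * ci
      + ((s a - p) * (s a - p)) * (ci * cj)
      + (Wj a * ((s a - p) * s a)) * ci
      + (Xj a * Wi a) * s a
      + (Wi a * ((s a - p) * s a)) * cj) μ := g7.add hiF8
  simp_rw [hexp]
  rw [integral_add g8 hiF9, integral_add g7 hiF8, integral_add g6 hiF7,
    integral_add g5 hiF6, integral_add g4 hiF5, integral_add g3 hiF4,
    integral_add g2 hiF3, integral_add hiF1 hiF2]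
  rw [hT2, hT3, hT4, hT5, hT6, hT7, hT8, hT9]
  have hF1 : ∫ a, Xi a * Xj a ∂μ = (A * P * Aᵀ) i j := hXXval i j
  rw [hF1]
  have hcc : (B * Matrix.vecMulVec u u * Bᵀ) i j = ci * cj := by
    rw [hcidef, hcjdef]
    simp only [Matrix.mul_apply, transpose_apply, vecMulVec_apply, Matrix.mulVec, dotProduct,
      Finset.sum_mul, Finset.mul_sum]
    refine Finset.sum_congr rfl fun k _ => Finset.sum_congr rfl fun l _ => by ring
  simp only [Matrix.add_apply, Matrix.smul_apply, smul_eq_mul, hcc]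
  ring
end
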